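/- (Null tail bound for the scan statistic.) Let N ≥ n ≥ 1 be integers, p₀ ∈ (0,1), and let W = (W_{ij}) be a symmetric {0,1}-valued N×N random matrix with zero diagonal whose upper-diagonal entries W_{ij} (i<j) are i.i.d. Bernoulli(p₀). Then for every a with p₀ ≤ a < 1, P( max_{|S|=n} W_S ≥ a · n(n−1)/2 ) ≤ exp( n log(N e / n) − (n(n−1)/2) · H_{p₀}(a) ), where W_S := Σ_{i<j, i,j∈S} W_{ij} and the maximum is over subsets S ⊆ {1,…,N} of size n. -/

import Mathlib

open MeasureTheory ProbabilityTheory Filter Real Topology Asymptotics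

noncomputable section

/-- The set of ordered pairs `(i,j)` with `i < j` in `Fin N`: the potential edges. -/
abbrev EdgePairs (N : ℕ) := {ij : Fin N × Fin N // ij.1 < ij.2}

/-- The sample space: an assignment of presence/absence to each potential edge. -/
abbrev GraphSpace (N : ℕ) := EdgePairs N → Bool

/-- Bernoulli measure on `Bool` with parameter `p` (clamped to `[0,1]`). -/
noncomputable def bern (p : ℝ) : Measure Bool :=
  (PMF.bernoulli (min (Real.toNNReal p) 1) (min_le_right _ _)).toMeasure

/-- The random graph measure in which each potential edge `(i,j)`, `i<j`, is present
independently with probability `q i j`. -/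
noncomputable def graphMeasure (N : ℕ) (q : Fin N → Fin N → ℝ) : Measure (GraphSpace N) :=
  Measure.pi fun ij => bern (q ij.val.1 ij.val.2)

/-- The Erdős–Rényi null measure `G(N, p₀)`. -/
noncomputable def nullMeasure (N : ℕ) (p0 : ℝ) : Measure (GraphSpace N) :=
  graphMeasure N fun _ _ => p0

/-- The alternative measure: edges inside `S` appear with probability `pin`,
all other edges with probability `pout`. -/
noncomputable def altMeasure (N : ℕ) (S : Finset (Fin N)) (pout pin : ℝ) :
    Measure (GraphSpace N) :=
  graphMeasure N fun i j => if i ∈ S ∧ j ∈ S then pin else pout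

/-- `WS S ω`: number of present edges with both endpoints in `S`. -/
def WS {N : ℕ} (S : Finset (Fin N)) (ω : GraphSpace N) : ℕ :=
  ∑ ij : EdgePairs N,
    if ij.val.1 ∈ S ∧ ij.val.2 ∈ S ∧ ω ij = true then 1 else 0

/-- Total number of edges. -/
def totalEdges {N : ℕ} (ω : GraphSpace N) : ℕ := WS Finset.univ ω

/-- Indicator (0/1) of the edge between `i` and `j`. -/
def edgeVal {N : ℕ} (ω : GraphSpace N) (i j : Fin N) : ℕ :=
  if h : i < j then (if ω ⟨(i, j), h⟩ then 1 else 0)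
  else if h' : j < i then (if ω ⟨(j, i), h'⟩ then 1 else 0)
  else 0

/-- Degree of node `i`. -/
def degree {N : ℕ} (i : Fin N) (ω : GraphSpace N) : ℕ := ∑ j, edgeVal ω i j

/-- The risk of a test `T` (rejecting when `T ω` holds): type I error under the null
with connection probability `pnull`, plus the worst type II error over communities `S`
of size `nn`, where under the alternative edges inside `S` have probability `pin` and
all other edges probability `pout`. -/
noncomputable def grisk (N nn : ℕ) (pnull pout pin : ℝ) (T : GraphSpace N → Prop) : ℝ :=
  (nullMeasure N pnull {ω | T ω}).toReal +
    ⨆ S : {S : Finset (Fin N) // S.card = nn},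
      (altMeasure N S.val pout pin {ω | ¬ T ω}).toReal

/-- Relative entropy (Kullback–Leibler divergence) of `Bern(q)` from `Bern(p)`. -/
noncomputable def H (p q : ℝ) : ℝ :=
  q * Real.log (q / p) + (1 - q) * Real.log ((1 - q) / (1 - p))


section ScanAux
open Finset

instance bern_prob (p : ℝ) : IsProbabilityMeasure (bern p) := by
  unfold bern; infer_instance

instance graphMeasure_prob (N : ℕ) (q : Fin N → Fin N → ℝ) :
    IsProbabilityMeasure (graphMeasure N q) := by
  unfold graphMeasure; infer_instance

instance nullMeasure_prob (N : ℕ) (p : ℝ) : IsProbabilityMeasure (nullMeasure N p) := by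
  unfold nullMeasure; infer_instance

lemma bern_true {p : ℝ} (hp : p ≤ 1) : bern p {true} = ENNReal.ofReal p := by
  rw [bern, PMF.toMeasure_apply_singleton _ _ (measurableSet_singleton _),
    PMF.bernoulli_apply]
  simp [min_eq_left (Real.toNNReal_le_one.mpr hp)]
  rfl

lemma bern_false {p : ℝ} (hp0 : 0 ≤ p) (hp : p ≤ 1) :
    bern p {false} = ENNReal.ofReal (1 - p) := by
  rw [bern, PMF.toMeasure_apply_singleton _ _ (measurableSet_singleton _),
    PMF.bernoulli_apply]
  simp only [Bool.cond_false, min_eq_left (Real.toNNReal_le_one.mpr hp)]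
  rw [ENNReal.ofReal]
  congr 1
  apply NNReal.coe_injective
  rw [NNReal.coe_sub (Real.toNNReal_le_one.mpr hp), Real.coe_toNNReal _ hp0,
    Real.coe_toNNReal _ (by linarith), NNReal.coe_one]

lemma integral_bern {p : ℝ} (hp0 : 0 ≤ p) (hp1 : p ≤ 1) (f : Bool → ℝ) :
    ∫ b, f b ∂bern p = p * f true + (1 - p) * f false := by
  rw [integral_fintype (Integrable.of_finite)]
  rw [Fintype.sum_bool]
  simp only [measureReal_def]
  rw [bern_true hp1, bern_false hp0 hp1, ENNReal.toReal_ofReal hp0,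
    ENNReal.toReal_ofReal (by linarith)]
  simp [mul_comm]

lemma two_mul_card_lt_pairs {α : Type*} [LinearOrder α] [DecidableEq α] (S : Finset α) :
    2 * ((S ×ˢ S).filter fun p => p.1 < p.2).card = S.card * S.card - S.card := by
  classical
  have hbij : ((S ×ˢ S).filter fun p => p.2 < p.1).card
      = ((S ×ˢ S).filter fun p => p.1 < p.2).card := by
    apply Finset.card_bij (fun p _ => Prod.swap p)
    · rintro ⟨x, y⟩ hp
      simp only [mem_filter, mem_product] at hp ⊢
      exact ⟨⟨hp.1.2, hp.1.1⟩, hp.2⟩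
    · rintro ⟨x, y⟩ _ ⟨x', y'⟩ _ h
      simp only [Prod.swap_prod_mk, Prod.mk.injEq] at h
      simp [Prod.ext_iff, h.1, h.2]
    · rintro ⟨x, y⟩ hp
      refine ⟨⟨y, x⟩, ?_, rfl⟩
      simp only [mem_filter, mem_product] at hp ⊢
      exact ⟨⟨hp.1.2, hp.1.1⟩, hp.2⟩
  have hdiag : ((S ×ˢ S).filter fun p => p.1 = p.2).card = S.card := by
    apply Finset.card_bij (fun p _ => p.1)
    · rintro ⟨x, y⟩ hp
      simp only [mem_filter, mem_product] at hp
      exact hp.1.1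
    · rintro ⟨x, y⟩ hx ⟨x', y'⟩ hy h
      simp only [mem_filter, mem_product] at hx hy
      simp only at h
      simp [Prod.ext_iff, h, ← hx.2, ← hy.2, h]
    · intro x hx
      exact ⟨⟨x, x⟩, by simp [hx], rfl⟩
  have hsplit : ((S ×ˢ S).filter fun p => p.1 < p.2).card
      + ((S ×ˢ S).filter fun p => ¬ p.1 < p.2).card = S.card * S.card := by
    rw [Finset.card_filter_add_card_filter_not, Finset.card_product]
  have hsplit2 : ((S ×ˢ S).filter fun p => ¬ p.1 < p.2).card
      = ((S ×ˢ S).filter fun p => p.2 < p.1).card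
        + ((S ×ˢ S).filter fun p => p.1 = p.2).card := by
    have : ((S ×ˢ S).filter fun p => ¬ p.1 < p.2)
        = ((S ×ˢ S).filter fun p => p.2 < p.1) ∪ ((S ×ˢ S).filter fun p => p.1 = p.2) := by
      rw [← Finset.filter_or]
      apply Finset.filter_congr
      rintro ⟨x, y⟩ _
      simp only [not_lt]
      constructor
      · intro h; rcases lt_or_eq_of_le h with h | h
        · exact Or.inl h
        · exact Or.inr h.symm
      · rintro (h | h); exact le_of_lt h; exact le_of_eq h.symm
    rw [this, Finset.card_union_of_disjoint]
    rw [Finset.disjoint_filter]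
    rintro ⟨x, y⟩ _ h h'
    simp only at h h'
    exact absurd h (h' ▸ lt_irrefl _)
  omega

/-- inner edge pairs of `S` -/
def inPairs {N : ℕ} (S : Finset (Fin N)) : Finset (EdgePairs N) :=
  Finset.univ.filter fun ij => ij.val.1 ∈ S ∧ ij.val.2 ∈ S

lemma card_inPairs {N : ℕ} (S : Finset (Fin N)) :
    (inPairs S).card = ((S ×ˢ S).filter fun p => p.1 < p.2).card := by
  apply Finset.card_bij (fun ij _ => ij.val)
  · rintro ⟨⟨x, y⟩, hlt⟩ hp
    simp only [inPairs, mem_filter, mem_univ, true_and] at hp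
    simp only [mem_filter, mem_product]
    exact ⟨⟨hp.1, hp.2⟩, hlt⟩
  · rintro ⟨p, _⟩ _ ⟨q, _⟩ _ h
    exact Subtype.ext h
  · rintro ⟨x, y⟩ hp
    simp only [mem_filter, mem_product] at hp
    exact ⟨⟨(x, y), hp.2⟩, by simp [inPairs, hp.1.1, hp.1.2], rfl⟩

lemma mgf_WS {N : ℕ} (p t : ℝ) (hp0 : 0 ≤ p) (hp1 : p ≤ 1) (S : Finset (Fin N)) :
    ∫ ω, Real.exp (t * (WS S ω : ℝ)) ∂nullMeasure N p
      = (p * Real.exp t + (1 - p)) ^ (inPairs S).card := by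
  classical
  letI : MeasureSpace Bool := ⟨bern p⟩
  have hvol : nullMeasure N p = (volume : Measure (GraphSpace N)) := by
    rw [nullMeasure, graphMeasure, volume_pi]
    rfl
  haveI hsf : SigmaFinite (volume : Measure Bool) := by
    haveI := bern_prob p
    infer_instance
  haveI : ∀ _ : EdgePairs N, SigmaFinite (volume : Measure Bool) := fun _ => hsf
  set g : EdgePairs N → Bool → ℝ := fun ij b =>
    if ij.val.1 ∈ S ∧ ij.val.2 ∈ S then (if b then Real.exp t else 1) else 1 with hg
  have hfac : ∀ ω : GraphSpace N,
      Real.exp (t * (WS S ω : ℝ)) = ∏ ij : EdgePairs N, g ij (ω ij) := by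
    intro ω
    have : (WS S ω : ℝ) = ∑ ij : EdgePairs N,
        (if ij.val.1 ∈ S ∧ ij.val.2 ∈ S ∧ ω ij = true then (1 : ℝ) else 0) := by
      rw [WS]; push_cast; rfl
    rw [this, Finset.mul_sum, Real.exp_sum]
    apply Finset.prod_congr rfl
    intro ij _
    by_cases h1 : ij.val.1 ∈ S ∧ ij.val.2 ∈ S
    · by_cases h2 : ω ij = true
      · simp [hg, h1, h2]
      · simp [hg, h1, h2]
    · have : ¬ (ij.val.1 ∈ S ∧ ij.val.2 ∈ S ∧ ω ij = true) := by tauto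
      simp [hg, h1, this]
  calc ∫ ω, Real.exp (t * (WS S ω : ℝ)) ∂nullMeasure N p
      = ∫ ω : GraphSpace N, ∏ ij : EdgePairs N, g ij (ω ij) := by
        rw [hvol]; exact integral_congr_ae (Filter.Eventually.of_forall hfac)
    _ = ∏ ij : EdgePairs N, ∫ b, g ij b := integral_fintype_prod_eq_prod g
    _ = (p * Real.exp t + (1 - p)) ^ (inPairs S).card := by
        rw [← Finset.prod_filter_mul_prod_filter_not Finset.univ
          (fun ij : EdgePairs N => ij.val.1 ∈ S ∧ ij.val.2 ∈ S)]
        have h1 : ∀ ij ∈ Finset.univ.filter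
            (fun ij : EdgePairs N => ij.val.1 ∈ S ∧ ij.val.2 ∈ S),
            ∫ b, g ij b = p * Real.exp t + (1 - p) := by
          intro ij hij
          simp only [mem_filter] at hij
          rw [show (∫ b, g ij b) = ∫ b, g ij b ∂bern p from rfl, integral_bern hp0 hp1]
          simp [hg, hij.2]
        have h2 : ∀ ij ∈ Finset.univ.filter
            (fun ij : EdgePairs N => ¬ (ij.val.1 ∈ S ∧ ij.val.2 ∈ S)),
            ∫ b, g ij b = 1 := by
          intro ij hij
          simp only [mem_filter] at hij
          rw [show (∫ b, g ij b) = ∫ b, g ij b ∂bern p from rfl, integral_bern hp0 hp1]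
          simp [hg, hij.2]
        rw [Finset.prod_congr rfl h1, Finset.prod_congr rfl h2, Finset.prod_const,
          Finset.prod_const_one, mul_one, inPairs]

end ScanAux


lemma H_identity {p a : ℝ} (hp0 : 0 < p) (hp1 : p < 1) (ha0 : 0 < a) (ha1 : a < 1) (m : ℝ) :
    m * Real.log ((1 - p) / (1 - a))
      - Real.log (a * (1 - p) / ((1 - a) * p)) * (a * m) = -(m * H p a) := by
  have h1a : (0:ℝ) < 1 - a := by linarith
  have h1p : (0:ℝ) < 1 - p := by linarith
  rw [H, Real.log_div (by positivity) (by positivity),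
    Real.log_div (by positivity) (by positivity),
    Real.log_div (by positivity) (by positivity),
    Real.log_div (by positivity) (by positivity),
    Real.log_mul (by positivity) (by positivity),
    Real.log_mul (by positivity) (by positivity)]
  ring

lemma chernoff_bound {N : ℕ} (p a : ℝ) (hp : p ∈ Set.Ioo (0:ℝ) 1) (ha : p ≤ a) (ha1 : a < 1)
    (S : Finset (Fin N)) :
    (nullMeasure N p {ω | a * ((S.card : ℝ) * ((S.card : ℝ) - 1) / 2) ≤ (WS S ω : ℝ)}).toReal
      ≤ Real.exp (-(((S.card : ℝ) * ((S.card : ℝ) - 1) / 2) * H p a)) := by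
  classical
  obtain ⟨hp0, hp1⟩ := hp
  have ha0 : 0 < a := lt_of_lt_of_le hp0 ha
  have h1a : (0:ℝ) < 1 - a := by linarith
  have h1p : (0:ℝ) < 1 - p := by linarith
  set c : ℕ := S.card with hc
  set K : ℕ := (inPairs S).card with hKdef
  set m : ℝ := (c : ℝ) * ((c : ℝ) - 1) / 2 with hm
  have hKm : (K : ℝ) = m := by
    have h2K : 2 * K = c * c - c := by
      rw [hKdef, card_inPairs]; exact two_mul_card_lt_pairs S
    have hle : c ≤ c * c := by
      rcases Nat.eq_zero_or_pos c with h | h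
      · simp [h]
      · exact Nat.le_mul_of_pos_left c h
    have : ((2 * K : ℕ) : ℝ) = ((c * c - c : ℕ) : ℝ) := by rw [h2K]
    rw [Nat.cast_mul, Nat.cast_sub hle, Nat.cast_mul] at this
    rw [hm]
    push_cast at this ⊢
    linarith
  by_cases hc0 : c = 0
  · -- degenerate, m = 0, K = 0; still fine: bound is exp 0 = 1 ≥ prob
    have : (nullMeasure N p {ω | a * m ≤ (WS S ω : ℝ)}).toReal ≤ 1 := by
      have := prob_le_one (μ := nullMeasure N p)
        (s := {ω | a * m ≤ (WS S ω : ℝ)})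
      exact ENNReal.toReal_le_of_le_ofReal zero_le_one (by simpa using this)
    refine this.trans ?_
    rw [hm, hc0]
    norm_num
  · have hm0 : 0 ≤ m := by rw [← hKm]; positivity
    set t : ℝ := Real.log (a * (1 - p) / ((1 - a) * p)) with htdef
    have hpos : (0:ℝ) < a * (1 - p) / ((1 - a) * p) := by positivity
    have hratio : (1:ℝ) ≤ a * (1 - p) / ((1 - a) * p) := by
      rw [le_div_iff₀ (by positivity)]
      nlinarith
    have ht : 0 ≤ t := Real.log_nonneg hratio
    have hexpt : Real.exp t = a * (1 - p) / ((1 - a) * p) := Real.exp_log hpos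
    have hkey : p * Real.exp t + (1 - p) = (1 - p) / (1 - a) := by
      rw [hexpt]; field_simp; ring
    have hmono : {ω : GraphSpace N | a * m ≤ (WS S ω : ℝ)} ⊆
        {ω : GraphSpace N | Real.exp (t * (a * m)) ≤ Real.exp (t * (WS S ω : ℝ))} := by
      intro ω h
      exact Real.exp_le_exp.mpr (mul_le_mul_of_nonneg_left h ht)
    have hmarkov := mul_meas_ge_le_integral_of_nonneg (μ := nullMeasure N p)
      (f := fun ω => Real.exp (t * (WS S ω : ℝ)))
      (Filter.Eventually.of_forall fun ω => (Real.exp_pos _).le)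
      (Integrable.of_finite) (Real.exp (t * (a * m)))
    rw [mgf_WS p t hp0.le hp1.le S] at hmarkov
    have hsub : (nullMeasure N p {ω | a * m ≤ (WS S ω : ℝ)}).toReal
        ≤ (nullMeasure N p {ω | Real.exp (t * (a * m)) ≤ Real.exp (t * (WS S ω : ℝ))}).toReal :=
      ENNReal.toReal_mono (measure_ne_top _ _) (measure_mono hmono)
    have hbound : (nullMeasure N p {ω | a * m ≤ (WS S ω : ℝ)}).toReal
        ≤ (p * Real.exp t + (1 - p)) ^ K / Real.exp (t * (a * m)) := by
      rw [le_div_iff₀ (Real.exp_pos _)]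
      calc (nullMeasure N p {ω | a * m ≤ (WS S ω : ℝ)}).toReal * Real.exp (t * (a * m))
          ≤ (nullMeasure N p {ω | Real.exp (t * (a * m)) ≤
              Real.exp (t * (WS S ω : ℝ))}).toReal * Real.exp (t * (a * m)) := by
            apply mul_le_mul_of_nonneg_right hsub (Real.exp_pos _).le
        _ ≤ (p * Real.exp t + (1 - p)) ^ K := by
            rw [mul_comm]; exact hmarkov
    refine hbound.trans ?_
    rw [hkey]
    have hdpos : (0:ℝ) < (1 - p) / (1 - a) := by positivity
    have hpowK : ((1 - p) / (1 - a)) ^ K = Real.exp ((K : ℝ) * Real.log ((1 - p) / (1 - a))) := by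
      rw [Real.exp_nat_mul, Real.exp_log hdpos]
    rw [hpowK, hKm, ← Real.exp_sub]
    apply le_of_eq
    congr 1
    have := H_identity hp0 hp1 ha0 ha1 m
    rw [← htdef] at this
    rw [show t * (a * m) = t * (a * m) from rfl]
    linarith [this]

lemma choose_le_exp (N n : ℕ) (hn : 1 ≤ n) (hnN : n ≤ N) :
    (N.choose n : ℝ) ≤ Real.exp ((n : ℝ) * Real.log ((N : ℝ) * Real.exp 1 / n)) := by
  have hn0 : (0:ℝ) < n := by exact_mod_cast hn
  have hN0 : (0:ℝ) < N := by exact_mod_cast lt_of_lt_of_le hn hnN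
  have h1 : (N.choose n : ℝ) * (Nat.factorial n : ℝ) ≤ (N : ℝ) ^ n := by
    have : N.choose n * Nat.factorial n ≤ N ^ n := by
      calc N.choose n * Nat.factorial n = N.descFactorial n := by
            rw [Nat.choose_eq_descFactorial_div_factorial,
              Nat.div_mul_cancel (Nat.factorial_dvd_descFactorial N n)]
        _ ≤ N ^ n := Nat.descFactorial_le_pow N n
    exact_mod_cast this
  have h2 : (n : ℝ) ^ n ≤ (Nat.factorial n : ℝ) * Real.exp n := by
    have hsum := Real.sum_le_exp_of_nonneg (x := (n:ℝ)) (by positivity) (n + 1)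
    have hterm : (n : ℝ) ^ n / (Nat.factorial n : ℝ) ≤ Real.exp n := by
      refine le_trans ?_ hsum
      exact Finset.single_le_sum (f := fun i => (n:ℝ)^i / (Nat.factorial i : ℝ))
        (fun i _ => by positivity) (Finset.self_mem_range_succ n)
    rw [div_le_iff₀ (by positivity)] at hterm
    linarith
  have hfac : (0:ℝ) < (Nat.factorial n : ℝ) := by exact_mod_cast Nat.factorial_pos n
  have hexpn : Real.exp (n : ℝ) = Real.exp 1 ^ n := by
    rw [← Real.exp_nat_mul, mul_one]
  have key : (N.choose n : ℝ) ≤ ((N : ℝ) * Real.exp 1 / n) ^ n := by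
    rw [div_pow, mul_pow, le_div_iff₀ (by positivity)]
    have hch : (0:ℝ) ≤ (N.choose n : ℝ) := by positivity
    have hexp1 : (0:ℝ) < Real.exp 1 ^ n := by positivity
    calc (N.choose n : ℝ) * (n:ℝ)^n ≤ (N.choose n : ℝ) * ((Nat.factorial n : ℝ) * Real.exp n) := by
          apply mul_le_mul_of_nonneg_left h2 hch
      _ = ((N.choose n : ℝ) * (Nat.factorial n : ℝ)) * Real.exp 1 ^ n := by rw [hexpn]; ring
      _ ≤ (N : ℝ) ^ n * Real.exp 1 ^ n := by
          apply mul_le_mul_of_nonneg_right h1 hexp1.le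
  refine key.trans (le_of_eq ?_)
  rw [Real.exp_nat_mul, Real.exp_log (by positivity)]

/-- null tail bound for the scan statistic: under `G(N, p₀)`, for any
`a ∈ [p₀, 1)`,
`P(max_{|S|=n} W_S ≥ a n(n−1)/2) ≤ exp(n log(Ne/n) − (n(n−1)/2) H_{p₀}(a))`. -/
theorem scan_statistic_null_tail_bound
    (N n : ℕ) (hn : 1 ≤ n) (hnN : n ≤ N) (p0 a : ℝ)
    (hp0 : p0 ∈ Set.Ioo (0 : ℝ) 1) (ha : p0 ≤ a) (ha1 : a < 1) :
    (nullMeasure N p0 {ω | ∃ S : Finset (Fin N), S.card = n ∧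
        a * ((n : ℝ) * ((n : ℝ) - 1) / 2) ≤ (WS S ω : ℝ)}).toReal ≤
      Real.exp ((n : ℝ) * Real.log ((N : ℝ) * Real.exp 1 / n) -
        ((n : ℝ) * ((n : ℝ) - 1) / 2) * H p0 a) := by
  classical
  set m : ℝ := (n : ℝ) * ((n : ℝ) - 1) / 2 with hm
  set c : ℝ := Real.exp (-(m * H p0 a)) with hcdef
  have hc0 : (0:ℝ) ≤ c := (Real.exp_pos _).le
  set P := Finset.powersetCard n (Finset.univ : Finset (Fin N)) with hP
  have hset : {ω : GraphSpace N | ∃ S : Finset (Fin N), S.card = n ∧ a * m ≤ (WS S ω : ℝ)}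
      = ⋃ S ∈ P, {ω : GraphSpace N | a * m ≤ (WS S ω : ℝ)} := by
    ext ω
    simp only [Set.mem_setOf_eq, Set.mem_iUnion, hP, Finset.mem_powersetCard_univ]
    constructor
    · rintro ⟨S, h1, h2⟩; exact ⟨S, h1, h2⟩
    · rintro ⟨S, h1, h2⟩; exact ⟨S, h1, h2⟩
  have hunion : nullMeasure N p0 {ω : GraphSpace N | ∃ S : Finset (Fin N),
        S.card = n ∧ a * m ≤ (WS S ω : ℝ)}
      ≤ ∑ S ∈ P, nullMeasure N p0 {ω : GraphSpace N | a * m ≤ (WS S ω : ℝ)} := by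
    rw [hset]; exact measure_biUnion_finset_le _ _
  have heach : ∀ S ∈ P, nullMeasure N p0 {ω : GraphSpace N | a * m ≤ (WS S ω : ℝ)}
      ≤ ENNReal.ofReal c := by
    intro S hS
    have hScard : S.card = n := Finset.mem_powersetCard_univ.mp hS
    have hcb := chernoff_bound p0 a hp0 ha ha1 S
    rw [hScard] at hcb
    rw [← hm, ← hcdef] at hcb
    exact (ENNReal.le_ofReal_iff_toReal_le (measure_ne_top _ _) hc0).mpr hcb
  have hsum : ∑ _S ∈ P, ENNReal.ofReal c = ENNReal.ofReal ((N.choose n : ℝ) * c) := by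
    rw [Finset.sum_const, hP, Finset.card_powersetCard, Finset.card_univ, Fintype.card_fin,
      nsmul_eq_mul, ← ENNReal.ofReal_natCast, ← ENNReal.ofReal_mul (Nat.cast_nonneg _)]
  have hle : nullMeasure N p0 {ω : GraphSpace N | ∃ S : Finset (Fin N),
        S.card = n ∧ a * m ≤ (WS S ω : ℝ)} ≤ ENNReal.ofReal ((N.choose n : ℝ) * c) :=
    hunion.trans ((Finset.sum_le_sum heach).trans_eq hsum)
  have hfin := ENNReal.toReal_le_of_le_ofReal (by positivity) hle
  refine hfin.trans ?_
  calc (N.choose n : ℝ) * c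
      ≤ Real.exp ((n : ℝ) * Real.log ((N : ℝ) * Real.exp 1 / n)) * c :=
        mul_le_mul_of_nonneg_right (choose_le_exp N n hn hnN) hc0
    _ = Real.exp ((n : ℝ) * Real.log ((N : ℝ) * Real.exp 1 / n) - m * H p0 a) := by
        rw [hcdef, ← Real.exp_add]
        congr 1
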